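/- Let v : ℝ_{>0} → ℝ be continuous with limsup_{x→∞} v(x)/x < c₀, satisfy v ≥ Mv where Mv(x) = sup_{i>0}{v(x+i) - c₀i - c₁} with c₀, c₁ > 0, and let x satisfy v(x) = Mv(x). Then the supremum defining Mv(x) is attained at some i* > 0. -/
import Mathlib


theorem stmt_7 (c₀ c₁ : ℝ) (hc₀ : 0 < c₀) (hc₁ : 0 < c₁) (v : ℝ → ℝ)
    (hcont : ContinuousOn v (Set.Ioi (0:ℝ)))
    (hgrowth : ∃ ε > (0:ℝ), ∃ xbar : ℝ, ∀ z ≥ xbar, 0 < z → v z / z ≤ c₀ - ε)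
    (hgeq : ∀ z > (0:ℝ), ∀ i > (0:ℝ), v (z + i) - c₀ * i - c₁ ≤ v z)
    (x : ℝ) (hx : 0 < x)
    (heq : v x = sSup {y : ℝ | ∃ i > (0:ℝ), y = v (x + i) - c₀ * i - c₁}) :
    ∃ i > (0:ℝ), v x = v (x + i) - c₀ * i - c₁ := by
  obtain ⟨ε, hε, xbar, hbar⟩ := hgrowth
  set S := {y : ℝ | ∃ i > (0:ℝ), y = v (x + i) - c₀ * i - c₁} with hSdef
  have hne : S.Nonempty := ⟨v (x + 1) - c₀ * 1 - c₁, 1, one_pos, rfl⟩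
  have hcx : ContinuousAt v x := hcont.continuousAt (Ioi_mem_nhds hx)
  obtain ⟨δ, hδ, hδ'⟩ := Metric.continuousAt_iff.mp hcx (c₁ / 2) (by positivity)
  set M := max (xbar - x) (((c₀ - ε) * x - v x) / ε) with hMdef
  have hsmall : ∀ i, 0 < i → i < δ → v (x + i) - c₀ * i - c₁ < v x - c₁ / 2 := by
    intro i hi hid
    have hd : dist (x + i) x < δ := by
      rw [Real.dist_eq]; simpa [abs_of_pos hi] using hid
    have := hδ' hd
    rw [Real.dist_eq] at this
    have h1 := (abs_lt.mp this).2
    nlinarith [mul_pos hc₀ hi]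
  have hlarge : ∀ i, 0 < i → M ≤ i → v (x + i) - c₀ * i - c₁ ≤ v x - c₁ := by
    intro i hi him
    have hz : (0:ℝ) < x + i := by linarith
    have h1 : xbar ≤ x + i := by
      have := le_trans (le_max_left (xbar - x) (((c₀ - ε) * x - v x) / ε)) him
      linarith
    have h2 : v (x + i) ≤ (c₀ - ε) * (x + i) := by
      have hq := hbar (x + i) h1 hz
      rw [div_le_iff₀ hz] at hq
      linarith
    have h3 : ((c₀ - ε) * x - v x) / ε ≤ i := le_trans (le_max_right _ _) him
    have h4 : (c₀ - ε) * x - v x ≤ ε * i := by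
      rw [div_le_iff₀ hε] at h3; linarith
    nlinarith
  have hlt : v x - c₁ / 2 < sSup S := by rw [← heq]; linarith
  obtain ⟨y, hyS, hy⟩ := exists_lt_of_lt_csSup hne hlt
  obtain ⟨i₀, hi₀, rfl⟩ := hyS
  have hi₀δ : δ ≤ i₀ := by
    by_contra h; push_neg at h
    linarith [hsmall i₀ hi₀ h]
  have hi₀M : i₀ ≤ M := by
    by_contra h; push_neg at h
    linarith [hlarge i₀ hi₀ h.le]
  have hfc : ContinuousOn (fun i => v (x + i) - c₀ * i - c₁) (Set.Icc δ M) := by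
    refine ((ContinuousOn.sub ?_ ?_).sub continuousOn_const)
    · refine hcont.comp ((continuous_const.add continuous_id).continuousOn) ?_
      intro i hi
      simp only [Set.mem_Ioi, id]
      linarith [hi.1]
    · exact (continuous_const.mul continuous_id).continuousOn
  obtain ⟨j, hjmem, hjmax⟩ :=
    isCompact_Icc.exists_isMaxOn ⟨i₀, hi₀δ, hi₀M⟩ hfc
  have hjpos : 0 < j := lt_of_lt_of_le hδ hjmem.1
  have hji₀ : v (x + i₀) - c₀ * i₀ - c₁ ≤ v (x + j) - c₀ * j - c₁ :=
    hjmax ⟨hi₀δ, hi₀M⟩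
  refine ⟨j, hjpos, le_antisymm ?_ (hgeq x hx j hjpos)⟩
  rw [heq]
  apply csSup_le hne
  rintro y ⟨i, hi, rfl⟩
  rcases lt_or_ge i δ with h | h
  · linarith [hsmall i hi h]
  rcases le_or_gt i M with h' | h'
  · exact hjmax ⟨h, h'⟩
  · linarith [hlarge i hi h'.le]
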